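/- Consider the system ẋ = x(2+ax+cz), ẏ = y(-1+dx+fz), ż = z(1+gx+kz), and suppose it admits two analytic first integrals of the form φ₁ = x·y²(1+O(x,y,z)) and φ₂ = y·z(1+O(x,y,z)) near the origin (so the system is integrable). If additionally there is an analytic function ξ = x^α y^β z^γ (1+O(x,y,z)) with X(ξ) = kξ where k = 2α - β + γ ≠ 0, then the system is linearizable: there is an analytic change of coordinates (x,y,z) ↦ (x̃,ỹ,z̃) = (x(1+O),y(1+O),z(1+O)) in which the system becomes ẋ̃ = 2x̃, ỹ̇ = -ỹ, ż̃ = z̃. -/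

import Mathlib

open Filter

/-- The vector field of the `(2:-1:1)`-resonant Lotka-Volterra system
`ẋ = x(2+ax+cz)`, `ẏ = y(-1+dx+fz)`, `ż = z(1+gx+kz)` applied to a function `φ`. -/
noncomputable def X211 (a c d f g k : ℝ) (φ : ℝ × ℝ × ℝ → ℝ) (p : ℝ × ℝ × ℝ) : ℝ :=
  p.1 * (2 + a * p.1 + c * p.2.2) * fderiv ℝ φ p (1, 0, 0)
    + p.2.1 * (-1 + d * p.1 + f * p.2.2) * fderiv ℝ φ p (0, 1, 0)
    + p.2.2 * (1 + g * p.1 + k * p.2.2) * fderiv ℝ φ p (0, 0, 1)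

lemma fderiv_mul_apply3 {φ ψ : ℝ × ℝ × ℝ → ℝ} {p v : ℝ × ℝ × ℝ}
    (hφ : DifferentiableAt ℝ φ p) (hψ : DifferentiableAt ℝ ψ p) :
    fderiv ℝ (fun q => φ q * ψ q) p v = fderiv ℝ φ p v * ψ p + φ p * fderiv ℝ ψ p v := by
  rw [fderiv_fun_mul hφ hψ]
  simp [ContinuousLinearMap.add_apply, ContinuousLinearMap.smul_apply]
  ring

lemma X211_mul (a c d f g k : ℝ) {φ ψ : ℝ × ℝ × ℝ → ℝ} {p : ℝ × ℝ × ℝ}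
    (hφ : DifferentiableAt ℝ φ p) (hψ : DifferentiableAt ℝ ψ p) :
    X211 a c d f g k (fun q => φ q * ψ q) p
      = X211 a c d f g k φ p * ψ p + φ p * X211 a c d f g k ψ p := by
  simp only [X211, fderiv_mul_apply3 hφ hψ]; ring

lemma diff_x {p : ℝ × ℝ × ℝ} : DifferentiableAt ℝ (fun q : ℝ × ℝ × ℝ => q.1) p :=
  (ContinuousLinearMap.fst ℝ ℝ (ℝ × ℝ)).differentiableAt

lemma diff_y {p : ℝ × ℝ × ℝ} : DifferentiableAt ℝ (fun q : ℝ × ℝ × ℝ => q.2.1) p :=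
  ((ContinuousLinearMap.fst ℝ ℝ ℝ).comp (ContinuousLinearMap.snd ℝ ℝ (ℝ × ℝ))).differentiableAt

lemma diff_z {p : ℝ × ℝ × ℝ} : DifferentiableAt ℝ (fun q : ℝ × ℝ × ℝ => q.2.2) p :=
  ((ContinuousLinearMap.snd ℝ ℝ ℝ).comp (ContinuousLinearMap.snd ℝ ℝ (ℝ × ℝ))).differentiableAt

lemma fderiv_x {p v : ℝ × ℝ × ℝ} : fderiv ℝ (fun q : ℝ × ℝ × ℝ => q.1) p v = v.1 := by
  rw [show (fun q : ℝ × ℝ × ℝ => q.1) = ⇑(ContinuousLinearMap.fst ℝ ℝ (ℝ × ℝ)) from rfl,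
    ContinuousLinearMap.fderiv]; rfl

lemma fderiv_y {p v : ℝ × ℝ × ℝ} : fderiv ℝ (fun q : ℝ × ℝ × ℝ => q.2.1) p v = v.2.1 := by
  rw [show (fun q : ℝ × ℝ × ℝ => q.2.1)
      = ⇑((ContinuousLinearMap.fst ℝ ℝ ℝ).comp (ContinuousLinearMap.snd ℝ ℝ (ℝ × ℝ))) from rfl,
    ContinuousLinearMap.fderiv]; rfl

lemma fderiv_z {p v : ℝ × ℝ × ℝ} : fderiv ℝ (fun q : ℝ × ℝ × ℝ => q.2.2) p v = v.2.2 := by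
  rw [show (fun q : ℝ × ℝ × ℝ => q.2.2)
      = ⇑((ContinuousLinearMap.snd ℝ ℝ ℝ).comp (ContinuousLinearMap.snd ℝ ℝ (ℝ × ℝ))) from rfl,
    ContinuousLinearMap.fderiv]; rfl

lemma X211_x (a c d f g k : ℝ) (p : ℝ × ℝ × ℝ) :
    X211 a c d f g k (fun q => q.1) p = p.1 * (2 + a * p.1 + c * p.2.2) := by
  simp [X211, fderiv_x]

lemma X211_y (a c d f g k : ℝ) (p : ℝ × ℝ × ℝ) :
    X211 a c d f g k (fun q => q.2.1) p = p.2.1 * (-1 + d * p.1 + f * p.2.2) := by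
  simp [X211, fderiv_y]

lemma X211_z (a c d f g k : ℝ) (p : ℝ × ℝ × ℝ) :
    X211 a c d f g k (fun q => q.2.2) p = p.2.2 * (1 + g * p.1 + k * p.2.2) := by
  simp [X211, fderiv_z]

lemma fderiv_rpow_apply {φ : ℝ × ℝ × ℝ → ℝ} {p v : ℝ × ℝ × ℝ} {r : ℝ}
    (hφ : DifferentiableAt ℝ φ p) (h0 : φ p ≠ 0) :
    fderiv ℝ (fun q => φ q ^ r) p v = r * φ p ^ (r - 1) * fderiv ℝ φ p v := by
  rw [(hφ.hasFDerivAt.rpow_const (Or.inl h0)).fderiv]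
  simp [ContinuousLinearMap.smul_apply]

lemma X211_rpow (a c d f g k : ℝ) {φ : ℝ × ℝ × ℝ → ℝ} {p : ℝ × ℝ × ℝ} {r : ℝ}
    (hφ : DifferentiableAt ℝ φ p) (h0 : φ p ≠ 0) :
    X211 a c d f g k (fun q => φ q ^ r) p = r * φ p ^ (r - 1) * X211 a c d f g k φ p := by
  simp only [X211, fderiv_rpow_apply hφ h0]; ring
lemma aadd {E : Type*} [NormedAddCommGroup E] [NormedSpace ℝ E] {f g : E → ℝ} {x : E}
    (hf : AnalyticAt ℝ f x) (hg : AnalyticAt ℝ g x) :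
    AnalyticAt ℝ (fun y => f y + g y) x := hf.add hg

lemma analyticAt_fderiv_apply {φ : ℝ × ℝ × ℝ → ℝ} {p : ℝ × ℝ × ℝ} (hφ : AnalyticAt ℝ φ p)
    (v : ℝ × ℝ × ℝ) : AnalyticAt ℝ (fun q => fderiv ℝ φ q v) p :=
  ((ContinuousLinearMap.apply ℝ ℝ v).analyticAt _).comp hφ.fderiv

lemma X211_analyticAt (a c d f g k : ℝ) {φ : ℝ × ℝ × ℝ → ℝ} {p : ℝ × ℝ × ℝ}
    (hφ : AnalyticAt ℝ φ p) : AnalyticAt ℝ (X211 a c d f g k φ) p := by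
  have h1 : AnalyticAt ℝ (fun q : ℝ × ℝ × ℝ => q.1) p :=
    (ContinuousLinearMap.fst ℝ ℝ (ℝ × ℝ)).analyticAt p
  have h2 : AnalyticAt ℝ (fun q : ℝ × ℝ × ℝ => q.2.1) p :=
    ((ContinuousLinearMap.fst ℝ ℝ ℝ).comp (ContinuousLinearMap.snd ℝ ℝ (ℝ × ℝ))).analyticAt p
  have h3 : AnalyticAt ℝ (fun q : ℝ × ℝ × ℝ => q.2.2) p :=
    ((ContinuousLinearMap.snd ℝ ℝ ℝ).comp (ContinuousLinearMap.snd ℝ ℝ (ℝ × ℝ))).analyticAt p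
  have t1 : AnalyticAt ℝ (fun q : ℝ × ℝ × ℝ =>
      q.1 * (2 + a * q.1 + c * q.2.2) * fderiv ℝ φ q (1, 0, 0)) p :=
    (h1.mul (aadd (aadd analyticAt_const (analyticAt_const.mul h1))
      (analyticAt_const.mul h3))).mul (analyticAt_fderiv_apply hφ _)
  have t2 : AnalyticAt ℝ (fun q : ℝ × ℝ × ℝ =>
      q.2.1 * (-1 + d * q.1 + f * q.2.2) * fderiv ℝ φ q (0, 1, 0)) p :=
    (h2.mul (aadd (aadd analyticAt_const (analyticAt_const.mul h1))
      (analyticAt_const.mul h3))).mul (analyticAt_fderiv_apply hφ _)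
  have t3 : AnalyticAt ℝ (fun q : ℝ × ℝ × ℝ =>
      q.2.2 * (1 + g * q.1 + k * q.2.2) * fderiv ℝ φ q (0, 0, 1)) p :=
    (h3.mul (aadd (aadd analyticAt_const (analyticAt_const.mul h1))
      (analyticAt_const.mul h3))).mul (analyticAt_fderiv_apply hφ _)
  have := aadd (aadd t1 t2) t3
  have he : (fun q : ℝ × ℝ × ℝ =>
      q.1 * (2 + a * q.1 + c * q.2.2) * fderiv ℝ φ q (1, 0, 0)
        + q.2.1 * (-1 + d * q.1 + f * q.2.2) * fderiv ℝ φ q (0, 1, 0)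
        + q.2.2 * (1 + g * q.1 + k * q.2.2) * fderiv ℝ φ q (0, 0, 1))
      = X211 a c d f g k φ := rfl
  rwa [← he]

lemma idlem {F : ℝ × ℝ × ℝ → ℝ} (hF : ∀ᶠ p in nhds (0 : ℝ × ℝ × ℝ), AnalyticAt ℝ F p)
    (h0 : ∀ᶠ p in nhds (0 : ℝ × ℝ × ℝ), (0 < p.1 ∧ 0 < p.2.1 ∧ 0 < p.2.2) → F p = 0) :
    ∀ᶠ p in nhds (0 : ℝ × ℝ × ℝ), F p = 0 := by
  obtain ⟨r, hr, hFr⟩ := Metric.eventually_nhds_iff_ball.mp (hF.and h0)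
  set p₀ : ℝ × ℝ × ℝ := (r/2, r/2, r/2) with hp₀def
  have hp₀ : p₀ ∈ Metric.ball (0 : ℝ × ℝ × ℝ) r := by
    simp only [Metric.mem_ball, dist_zero_right, hp₀def, Prod.norm_def, Real.norm_eq_abs,
      abs_of_pos (by linarith : (0:ℝ) < r/2), max_self]
    linarith
  have hoct : IsOpen {q : ℝ × ℝ × ℝ | 0 < q.1 ∧ 0 < q.2.1 ∧ 0 < q.2.2} := by
    have he : {q : ℝ × ℝ × ℝ | 0 < q.1 ∧ 0 < q.2.1 ∧ 0 < q.2.2}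
        = (fun q : ℝ × ℝ × ℝ => q.1) ⁻¹' Set.Ioi 0
          ∩ ((fun q : ℝ × ℝ × ℝ => q.2.1) ⁻¹' Set.Ioi 0
            ∩ ((fun q : ℝ × ℝ × ℝ => q.2.2) ⁻¹' Set.Ioi 0)) := rfl
    rw [he]
    exact (isOpen_Ioi.preimage continuous_fst).inter
      ((isOpen_Ioi.preimage (continuous_fst.comp continuous_snd)).inter
        (isOpen_Ioi.preimage (continuous_snd.comp continuous_snd)))
  have hev : F =ᶠ[nhds p₀] 0 := by
    have hmem : p₀ ∈ Metric.ball (0 : ℝ × ℝ × ℝ) r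
        ∩ {q : ℝ × ℝ × ℝ | 0 < q.1 ∧ 0 < q.2.1 ∧ 0 < q.2.2} :=
      ⟨hp₀, ⟨by simp [hp₀def]; linarith, by simp [hp₀def]; linarith, by simp [hp₀def]; linarith⟩⟩
    filter_upwards [((Metric.isOpen_ball.inter hoct).mem_nhds hmem)] with q hq
    exact (hFr q hq.1).2 hq.2
  have heq := AnalyticOnNhd.eqOn_zero_of_preconnected_of_eventuallyEq_zero
    (fun p hp => (hFr p hp).1) (convex_ball (0 : ℝ × ℝ × ℝ) r).isPreconnected hp₀ hev
  filter_upwards [Metric.ball_mem_nhds (0 : ℝ × ℝ × ℝ) hr] with q hq using heq hq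

lemma analyticAt_log_pos {x : ℝ} (hx : 0 < x) : AnalyticAt ℝ Real.log x := by
  have hc : AnalyticAt ℝ (fun t : ℝ => Complex.log (t : ℂ)) x :=
    AnalyticAt.comp (f := fun t : ℝ => (t : ℂ)) (g := Complex.log)
      ((analyticAt_clog (by simp [Complex.mem_slitPlane_iff]; exact hx)).restrictScalars)
      (Complex.ofRealCLM.analyticAt x)
  have h : AnalyticAt ℝ (fun t : ℝ => (Complex.log (t : ℂ)).re) x :=
    AnalyticAt.comp (g := Complex.re) (Complex.reCLM.analyticAt _) hc
  have he : (fun t : ℝ => (Complex.log (t : ℂ)).re) = Real.log := by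
    funext t; exact Complex.log_ofReal_re t
  rwa [he] at h

lemma analyticAt_rpow_comp {E : Type*} [NormedAddCommGroup E] [NormedSpace ℝ E]
    {h : E → ℝ} {x : E} (hh : AnalyticAt ℝ h x) (hpos : 0 < h x) (r : ℝ) :
    AnalyticAt ℝ (fun q => h q ^ r) x := by
  have hev : ∀ᶠ q in nhds x, Real.exp (Real.log (h q) * r) = h q ^ r := by
    filter_upwards [hh.continuousAt.preimage_mem_nhds (Ioi_mem_nhds hpos)] with q hq
    rw [Real.rpow_def_of_pos hq]
  have ha : AnalyticAt ℝ (fun q => Real.exp (Real.log (h q) * r)) x :=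
    AnalyticAt.comp (g := Real.exp) analyticAt_rexp
      (((analyticAt_log_pos hpos).comp hh).mul analyticAt_const)
  exact ha.congr hev

lemma X211_xrpow (a c d f g k r : ℝ) {p : ℝ × ℝ × ℝ} (hx : 0 < p.1) :
    X211 a c d f g k (fun q => q.1 ^ r) p = r * (2 + a * p.1 + c * p.2.2) * p.1 ^ r := by
  rw [X211_rpow a c d f g k diff_x hx.ne', X211_x]
  have h : p.1 ^ (r - 1) * p.1 = p.1 ^ r := by
    rw [← Real.rpow_add_one hx.ne']; norm_num
  linear_combination r * (2 + a * p.1 + c * p.2.2) * h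

lemma X211_yrpow (a c d f g k r : ℝ) {p : ℝ × ℝ × ℝ} (hy : 0 < p.2.1) :
    X211 a c d f g k (fun q => q.2.1 ^ r) p = r * (-1 + d * p.1 + f * p.2.2) * p.2.1 ^ r := by
  rw [X211_rpow a c d f g k diff_y hy.ne', X211_y]
  have h : p.2.1 ^ (r - 1) * p.2.1 = p.2.1 ^ r := by
    rw [← Real.rpow_add_one hy.ne']; norm_num
  linear_combination r * (-1 + d * p.1 + f * p.2.2) * h

lemma X211_zrpow (a c d f g k r : ℝ) {p : ℝ × ℝ × ℝ} (hz : 0 < p.2.2) :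
    X211 a c d f g k (fun q => q.2.2 ^ r) p = r * (1 + g * p.1 + k * p.2.2) * p.2.2 ^ r := by
  rw [X211_rpow a c d f g k diff_z hz.ne', X211_z]
  have h : p.2.2 ^ (r - 1) * p.2.2 = p.2.2 ^ r := by
    rw [← Real.rpow_add_one hz.ne']; norm_num
  linear_combination r * (1 + g * p.1 + k * p.2.2) * h

lemma X211_combo (a c d f g k s t r C₁ C₂ C₃ : ℝ) {m₁ m₂ ξ₀ : ℝ × ℝ × ℝ → ℝ} {p : ℝ × ℝ × ℝ}
    (h₁ : DifferentiableAt ℝ m₁ p) (h₂ : DifferentiableAt ℝ m₂ p)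
    (h₃ : DifferentiableAt ℝ ξ₀ p)
    (pos₁ : 0 < m₁ p) (pos₂ : 0 < m₂ p) (pos₃ : 0 < ξ₀ p)
    (e₁ : X211 a c d f g k m₁ p = C₁ * m₁ p)
    (e₂ : X211 a c d f g k m₂ p = C₂ * m₂ p)
    (e₃ : X211 a c d f g k ξ₀ p = C₃ * ξ₀ p) :
    X211 a c d f g k (fun q => m₁ q ^ s * (m₂ q ^ t * ξ₀ q ^ r)) p
      = (s * C₁ + t * C₂ + r * C₃) * (m₁ p ^ s * (m₂ p ^ t * ξ₀ p ^ r)) := by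
  have d₁ : DifferentiableAt ℝ (fun q => m₁ q ^ s) p := h₁.rpow_const (Or.inl pos₁.ne')
  have d₂ : DifferentiableAt ℝ (fun q => m₂ q ^ t) p := h₂.rpow_const (Or.inl pos₂.ne')
  have d₃ : DifferentiableAt ℝ (fun q => ξ₀ q ^ r) p := h₃.rpow_const (Or.inl pos₃.ne')
  have E : X211 a c d f g k (fun q => m₁ q ^ s * (m₂ q ^ t * ξ₀ q ^ r)) p
      = X211 a c d f g k (fun q => m₁ q ^ s) p * (m₂ p ^ t * ξ₀ p ^ r)
        + m₁ p ^ s * X211 a c d f g k (fun q => m₂ q ^ t * ξ₀ q ^ r) p :=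
    X211_mul a c d f g k d₁ (d₂.mul d₃)
  have E' : X211 a c d f g k (fun q => m₂ q ^ t * ξ₀ q ^ r) p
      = X211 a c d f g k (fun q => m₂ q ^ t) p * ξ₀ p ^ r
        + m₂ p ^ t * X211 a c d f g k (fun q => ξ₀ q ^ r) p :=
    X211_mul a c d f g k d₂ d₃
  rw [E, E', X211_rpow a c d f g k h₁ pos₁.ne', X211_rpow a c d f g k h₂ pos₂.ne',
    X211_rpow a c d f g k h₃ pos₃.ne', e₁, e₂, e₃]
  have R₁ : m₁ p ^ (s - 1) * m₁ p = m₁ p ^ s := by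
    rw [← Real.rpow_add_one pos₁.ne']; norm_num
  have R₂ : m₂ p ^ (t - 1) * m₂ p = m₂ p ^ t := by
    rw [← Real.rpow_add_one pos₂.ne']; norm_num
  have R₃ : ξ₀ p ^ (r - 1) * ξ₀ p = ξ₀ p ^ r := by
    rw [← Real.rpow_add_one pos₃.ne']; norm_num
  linear_combination (s * C₁ * (m₂ p ^ t * ξ₀ p ^ r)) * R₁
    + (t * C₂ * (m₁ p ^ s * ξ₀ p ^ r)) * R₂
    + (r * C₃ * (m₁ p ^ s * m₂ p ^ t)) * R₃

lemma aX {p : ℝ × ℝ × ℝ} : AnalyticAt ℝ (fun q : ℝ × ℝ × ℝ => q.1) p :=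
  (ContinuousLinearMap.fst ℝ ℝ (ℝ × ℝ)).analyticAt p

lemma aY {p : ℝ × ℝ × ℝ} : AnalyticAt ℝ (fun q : ℝ × ℝ × ℝ => q.2.1) p :=
  ((ContinuousLinearMap.fst ℝ ℝ ℝ).comp (ContinuousLinearMap.snd ℝ ℝ (ℝ × ℝ))).analyticAt p

lemma aZ {p : ℝ × ℝ × ℝ} : AnalyticAt ℝ (fun q : ℝ × ℝ × ℝ => q.2.2) p :=
  ((ContinuousLinearMap.snd ℝ ℝ ℝ).comp (ContinuousLinearMap.snd ℝ ℝ (ℝ × ℝ))).analyticAt p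

lemma step1 (a c d f g k α β γ s t r : ℝ) {m₁ m₂ ξ₀ : ℝ × ℝ × ℝ → ℝ} {p : ℝ × ℝ × ℝ}
    (hp₁ : DifferentiableAt ℝ m₁ p) (hp₂ : DifferentiableAt ℝ m₂ p)
    (hp₃ : DifferentiableAt ℝ ξ₀ p)
    (h1 : 0 < m₁ p) (h2 : 0 < m₂ p) (h3 : 0 < ξ₀ p)
    (e₁ : X211 a c d f g k m₁ p = -((a + 2*d) * p.1 + (c + 2*f) * p.2.2) * m₁ p)
    (e₂ : X211 a c d f g k m₂ p = -((d + g) * p.1 + (f + k) * p.2.2) * m₂ p)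
    (e₃ : X211 a c d f g k ξ₀ p
      = -((α*a + β*d + γ*g) * p.1 + (α*c + β*f + γ*k) * p.2.2) * ξ₀ p)
    (hcx : s*(a + 2*d) + t*(d + g) + r*(α*a + β*d + γ*g) = a)
    (hcz : s*(c + 2*f) + t*(f + k) + r*(α*c + β*f + γ*k) = c) :
    X211 a c d f g k (fun q => q.1 * (m₁ q ^ s * (m₂ q ^ t * ξ₀ q ^ r))) p
      = 2 * (p.1 * (m₁ p ^ s * (m₂ p ^ t * ξ₀ p ^ r))) := by
  have Du : DifferentiableAt ℝ (fun q => m₁ q ^ s * (m₂ q ^ t * ξ₀ q ^ r)) p :=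
    (hp₁.rpow_const (Or.inl h1.ne')).mul
      ((hp₂.rpow_const (Or.inl h2.ne')).mul (hp₃.rpow_const (Or.inl h3.ne')))
  have E : X211 a c d f g k (fun q => q.1 * (m₁ q ^ s * (m₂ q ^ t * ξ₀ q ^ r))) p
      = X211 a c d f g k (fun q : ℝ × ℝ × ℝ => q.1) p * (m₁ p ^ s * (m₂ p ^ t * ξ₀ p ^ r))
        + p.1 * X211 a c d f g k (fun q => m₁ q ^ s * (m₂ q ^ t * ξ₀ q ^ r)) p :=
    X211_mul a c d f g k diff_x Du
  rw [E, X211_x,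
    X211_combo a c d f g k s t r _ _ _ hp₁ hp₂ hp₃ h1 h2 h3 e₁ e₂ e₃]
  linear_combination (-(p.1 * (m₁ p ^ s * (m₂ p ^ t * ξ₀ p ^ r))) * p.1) * hcx
    + (-(p.1 * (m₁ p ^ s * (m₂ p ^ t * ξ₀ p ^ r))) * p.2.2) * hcz

lemma step2 (a c d f g k α β γ s t r : ℝ) {m₁ m₂ ξ₀ : ℝ × ℝ × ℝ → ℝ} {p : ℝ × ℝ × ℝ}
    (hp₁ : DifferentiableAt ℝ m₁ p) (hp₂ : DifferentiableAt ℝ m₂ p)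
    (hp₃ : DifferentiableAt ℝ ξ₀ p)
    (h1 : 0 < m₁ p) (h2 : 0 < m₂ p) (h3 : 0 < ξ₀ p)
    (e₁ : X211 a c d f g k m₁ p = -((a + 2*d) * p.1 + (c + 2*f) * p.2.2) * m₁ p)
    (e₂ : X211 a c d f g k m₂ p = -((d + g) * p.1 + (f + k) * p.2.2) * m₂ p)
    (e₃ : X211 a c d f g k ξ₀ p
      = -((α*a + β*d + γ*g) * p.1 + (α*c + β*f + γ*k) * p.2.2) * ξ₀ p)
    (hcx : s*(a + 2*d) + t*(d + g) + r*(α*a + β*d + γ*g) = d)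
    (hcz : s*(c + 2*f) + t*(f + k) + r*(α*c + β*f + γ*k) = f) :
    X211 a c d f g k (fun q => q.2.1 * (m₁ q ^ s * (m₂ q ^ t * ξ₀ q ^ r))) p
      = -(p.2.1 * (m₁ p ^ s * (m₂ p ^ t * ξ₀ p ^ r))) := by
  have Du : DifferentiableAt ℝ (fun q => m₁ q ^ s * (m₂ q ^ t * ξ₀ q ^ r)) p :=
    (hp₁.rpow_const (Or.inl h1.ne')).mul
      ((hp₂.rpow_const (Or.inl h2.ne')).mul (hp₃.rpow_const (Or.inl h3.ne')))
  have E : X211 a c d f g k (fun q => q.2.1 * (m₁ q ^ s * (m₂ q ^ t * ξ₀ q ^ r))) p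
      = X211 a c d f g k (fun q : ℝ × ℝ × ℝ => q.2.1) p * (m₁ p ^ s * (m₂ p ^ t * ξ₀ p ^ r))
        + p.2.1 * X211 a c d f g k (fun q => m₁ q ^ s * (m₂ q ^ t * ξ₀ q ^ r)) p :=
    X211_mul a c d f g k diff_y Du
  rw [E, X211_y,
    X211_combo a c d f g k s t r _ _ _ hp₁ hp₂ hp₃ h1 h2 h3 e₁ e₂ e₃]
  linear_combination (-(p.2.1 * (m₁ p ^ s * (m₂ p ^ t * ξ₀ p ^ r))) * p.1) * hcx
    + (-(p.2.1 * (m₁ p ^ s * (m₂ p ^ t * ξ₀ p ^ r))) * p.2.2) * hcz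

lemma step3 (a c d f g k α β γ s t r : ℝ) {m₁ m₂ ξ₀ : ℝ × ℝ × ℝ → ℝ} {p : ℝ × ℝ × ℝ}
    (hp₁ : DifferentiableAt ℝ m₁ p) (hp₂ : DifferentiableAt ℝ m₂ p)
    (hp₃ : DifferentiableAt ℝ ξ₀ p)
    (h1 : 0 < m₁ p) (h2 : 0 < m₂ p) (h3 : 0 < ξ₀ p)
    (e₁ : X211 a c d f g k m₁ p = -((a + 2*d) * p.1 + (c + 2*f) * p.2.2) * m₁ p)
    (e₂ : X211 a c d f g k m₂ p = -((d + g) * p.1 + (f + k) * p.2.2) * m₂ p)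
    (e₃ : X211 a c d f g k ξ₀ p
      = -((α*a + β*d + γ*g) * p.1 + (α*c + β*f + γ*k) * p.2.2) * ξ₀ p)
    (hcx : s*(a + 2*d) + t*(d + g) + r*(α*a + β*d + γ*g) = g)
    (hcz : s*(c + 2*f) + t*(f + k) + r*(α*c + β*f + γ*k) = k) :
    X211 a c d f g k (fun q => q.2.2 * (m₁ q ^ s * (m₂ q ^ t * ξ₀ q ^ r))) p
      = p.2.2 * (m₁ p ^ s * (m₂ p ^ t * ξ₀ p ^ r)) := by
  have Du : DifferentiableAt ℝ (fun q => m₁ q ^ s * (m₂ q ^ t * ξ₀ q ^ r)) p :=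
    (hp₁.rpow_const (Or.inl h1.ne')).mul
      ((hp₂.rpow_const (Or.inl h2.ne')).mul (hp₃.rpow_const (Or.inl h3.ne')))
  have E : X211 a c d f g k (fun q => q.2.2 * (m₁ q ^ s * (m₂ q ^ t * ξ₀ q ^ r))) p
      = X211 a c d f g k (fun q : ℝ × ℝ × ℝ => q.2.2) p * (m₁ p ^ s * (m₂ p ^ t * ξ₀ p ^ r))
        + p.2.2 * X211 a c d f g k (fun q => m₁ q ^ s * (m₂ q ^ t * ξ₀ q ^ r)) p :=
    X211_mul a c d f g k diff_z Du
  rw [E, X211_z,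
    X211_combo a c d f g k s t r _ _ _ hp₁ hp₂ hp₃ h1 h2 h3 e₁ e₂ e₃]
  linear_combination (-(p.2.2 * (m₁ p ^ s * (m₂ p ^ t * ξ₀ p ^ r))) * p.1) * hcx
    + (-(p.2.2 * (m₁ p ^ s * (m₂ p ^ t * ξ₀ p ^ r))) * p.2.2) * hcz

/-- If the system `ẋ = x(2+ax+cz)`, `ẏ = y(-1+dx+fz)`, `ż = z(1+gx+kz)` has two analytic
first integrals `φ₁ = x y² (1+O(x,y,z))` and `φ₂ = y z (1+O(x,y,z))`, and a function
`ξ = x^α y^β z^γ (1+O(x,y,z))` with `X(ξ) = κ ξ`, `κ = 2α-β+γ ≠ 0`, then the system is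
linearizable. -/
theorem stmt7 (a c d f g k α β γ κ : ℝ) (hκ : κ = 2*α - β + γ) (hκ0 : κ ≠ 0)
    (m₁ m₂ ξ₀ : ℝ × ℝ × ℝ → ℝ)
    (hm₁ : AnalyticAt ℝ m₁ 0) (hm₁0 : m₁ 0 = 1)
    (hm₂ : AnalyticAt ℝ m₂ 0) (hm₂0 : m₂ 0 = 1)
    (hξ₀ : AnalyticAt ℝ ξ₀ 0) (hξ₀0 : ξ₀ 0 = 1)
    (hφ₁ : ∀ᶠ p in nhds (0 : ℝ × ℝ × ℝ),
      X211 a c d f g k (fun q => q.1 * q.2.1 ^ 2 * m₁ q) p = 0)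
    (hφ₂ : ∀ᶠ p in nhds (0 : ℝ × ℝ × ℝ),
      X211 a c d f g k (fun q => q.2.1 * q.2.2 * m₂ q) p = 0)
    (hξ : ∀ᶠ p in nhdsWithin (0 : ℝ × ℝ × ℝ)
        {q : ℝ × ℝ × ℝ | 0 < q.1 ∧ 0 < q.2.1 ∧ 0 < q.2.2},
      X211 a c d f g k (fun q => q.1 ^ α * q.2.1 ^ β * q.2.2 ^ γ * ξ₀ q) p
        = κ * (p.1 ^ α * p.2.1 ^ β * p.2.2 ^ γ * ξ₀ p)) :
    ∃ u v w : ℝ × ℝ × ℝ → ℝ,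
      AnalyticAt ℝ u 0 ∧ u 0 = 1 ∧ AnalyticAt ℝ v 0 ∧ v 0 = 1 ∧
      AnalyticAt ℝ w 0 ∧ w 0 = 1 ∧
      ∀ᶠ p in nhds (0 : ℝ × ℝ × ℝ),
        X211 a c d f g k (fun q => q.1 * u q) p = 2 * (p.1 * u p) ∧
        X211 a c d f g k (fun q => q.2.1 * v q) p = -(p.2.1 * v p) ∧
        X211 a c d f g k (fun q => q.2.2 * w q) p = p.2.2 * w p := by
  subst hκ
  have am₁ := hm₁.eventually_analyticAt
  have am₂ := hm₂.eventually_analyticAt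
  have aξ := hξ₀.eventually_analyticAt
  have pos₁ : ∀ᶠ p in nhds (0 : ℝ × ℝ × ℝ), 0 < m₁ p :=
    hm₁.continuousAt.preimage_mem_nhds (Ioi_mem_nhds (by rw [hm₁0]; norm_num))
  have pos₂ : ∀ᶠ p in nhds (0 : ℝ × ℝ × ℝ), 0 < m₂ p :=
    hm₂.continuousAt.preimage_mem_nhds (Ioi_mem_nhds (by rw [hm₂0]; norm_num))
  have pos₃ : ∀ᶠ p in nhds (0 : ℝ × ℝ × ℝ), 0 < ξ₀ p :=
    hξ₀.continuousAt.preimage_mem_nhds (Ioi_mem_nhds (by rw [hξ₀0]; norm_num))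
  -- derived cofactor equations
  have E₁ : ∀ᶠ p in nhds (0 : ℝ × ℝ × ℝ),
      X211 a c d f g k m₁ p = -((a + 2*d) * p.1 + (c + 2*f) * p.2.2) * m₁ p := by
    have hid := idlem
      (F := fun p => X211 a c d f g k m₁ p + ((a + 2*d) * p.1 + (c + 2*f) * p.2.2) * m₁ p)
      (by
        filter_upwards [am₁] with p hp
        exact aadd (X211_analyticAt a c d f g k hp)
          ((aadd (analyticAt_const.mul aX) (analyticAt_const.mul aZ)).mul hp))
      (by
        filter_upwards [hφ₁, am₁] with p h0 hp
        rintro ⟨hx, hy, hz⟩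
        have hfun : (fun q : ℝ × ℝ × ℝ => q.1 * q.2.1 ^ 2 * m₁ q)
            = fun q : ℝ × ℝ × ℝ => q.1 * (q.2.1 * q.2.1) * m₁ q := by
          funext q; ring
        rw [hfun] at h0
        have e : X211 a c d f g k (fun q : ℝ × ℝ × ℝ => q.1 * (q.2.1 * q.2.1) * m₁ q) p
            = X211 a c d f g k (fun q : ℝ × ℝ × ℝ => q.1 * (q.2.1 * q.2.1)) p * m₁ p
              + (p.1 * (p.2.1 * p.2.1)) * X211 a c d f g k m₁ p :=
          X211_mul a c d f g k (diff_x.mul (diff_y.mul diff_y)) hp.differentiableAt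
        have e2 : X211 a c d f g k (fun q : ℝ × ℝ × ℝ => q.1 * (q.2.1 * q.2.1)) p
            = X211 a c d f g k (fun q : ℝ × ℝ × ℝ => q.1) p * (p.2.1 * p.2.1)
              + p.1 * X211 a c d f g k (fun q : ℝ × ℝ × ℝ => q.2.1 * q.2.1) p :=
          X211_mul a c d f g k diff_x (diff_y.mul diff_y)
        have e3 : X211 a c d f g k (fun q : ℝ × ℝ × ℝ => q.2.1 * q.2.1) p
            = X211 a c d f g k (fun q : ℝ × ℝ × ℝ => q.2.1) p * p.2.1
              + p.2.1 * X211 a c d f g k (fun q : ℝ × ℝ × ℝ => q.2.1) p :=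
          X211_mul a c d f g k diff_y diff_y
        rw [e, e2, e3, X211_x, X211_y] at h0
        have key : p.1 * (p.2.1 * p.2.1) * (X211 a c d f g k m₁ p
            + ((a + 2*d) * p.1 + (c + 2*f) * p.2.2) * m₁ p) = 0 := by
          linear_combination h0
        have hne : p.1 * (p.2.1 * p.2.1) ≠ 0 :=
          mul_ne_zero hx.ne' (mul_ne_zero hy.ne' hy.ne')
        exact (mul_eq_zero.mp key).resolve_left hne)
    filter_upwards [hid] with p hp
    linear_combination hp
  have E₂ : ∀ᶠ p in nhds (0 : ℝ × ℝ × ℝ),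
      X211 a c d f g k m₂ p = -((d + g) * p.1 + (f + k) * p.2.2) * m₂ p := by
    have hid := idlem
      (F := fun p => X211 a c d f g k m₂ p + ((d + g) * p.1 + (f + k) * p.2.2) * m₂ p)
      (by
        filter_upwards [am₂] with p hp
        exact aadd (X211_analyticAt a c d f g k hp)
          ((aadd (analyticAt_const.mul aX) (analyticAt_const.mul aZ)).mul hp))
      (by
        filter_upwards [hφ₂, am₂] with p h0 hp
        rintro ⟨hx, hy, hz⟩
        have e : X211 a c d f g k (fun q : ℝ × ℝ × ℝ => q.2.1 * q.2.2 * m₂ q) p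
            = X211 a c d f g k (fun q : ℝ × ℝ × ℝ => q.2.1 * q.2.2) p * m₂ p
              + (p.2.1 * p.2.2) * X211 a c d f g k m₂ p :=
          X211_mul a c d f g k (diff_y.mul diff_z) hp.differentiableAt
        have e2 : X211 a c d f g k (fun q : ℝ × ℝ × ℝ => q.2.1 * q.2.2) p
            = X211 a c d f g k (fun q : ℝ × ℝ × ℝ => q.2.1) p * p.2.2
              + p.2.1 * X211 a c d f g k (fun q : ℝ × ℝ × ℝ => q.2.2) p :=
          X211_mul a c d f g k diff_y diff_z
        rw [e, e2, X211_y, X211_z] at h0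
        have key : p.2.1 * p.2.2 * (X211 a c d f g k m₂ p
            + ((d + g) * p.1 + (f + k) * p.2.2) * m₂ p) = 0 := by
          linear_combination h0
        have hne : p.2.1 * p.2.2 ≠ 0 := mul_ne_zero hy.ne' hz.ne'
        exact (mul_eq_zero.mp key).resolve_left hne)
    filter_upwards [hid] with p hp
    linear_combination hp
  have E₃ : ∀ᶠ p in nhds (0 : ℝ × ℝ × ℝ),
      X211 a c d f g k ξ₀ p
        = -((α*a + β*d + γ*g) * p.1 + (α*c + β*f + γ*k) * p.2.2) * ξ₀ p := by
    have hid := idlem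
      (F := fun p => X211 a c d f g k ξ₀ p
        + ((α*a + β*d + γ*g) * p.1 + (α*c + β*f + γ*k) * p.2.2) * ξ₀ p)
      (by
        filter_upwards [aξ] with p hp
        exact aadd (X211_analyticAt a c d f g k hp)
          ((aadd (analyticAt_const.mul aX) (analyticAt_const.mul aZ)).mul hp))
      (by
        filter_upwards [eventually_nhdsWithin_iff.mp hξ, aξ] with p h0 hp
        rintro ⟨hx, hy, hz⟩
        specialize h0 ⟨hx, hy, hz⟩
        have dα : DifferentiableAt ℝ (fun q : ℝ × ℝ × ℝ => q.1 ^ α) p :=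
          diff_x.rpow_const (Or.inl hx.ne')
        have dβ : DifferentiableAt ℝ (fun q : ℝ × ℝ × ℝ => q.2.1 ^ β) p :=
          diff_y.rpow_const (Or.inl hy.ne')
        have dγ : DifferentiableAt ℝ (fun q : ℝ × ℝ × ℝ => q.2.2 ^ γ) p :=
          diff_z.rpow_const (Or.inl hz.ne')
        have e : X211 a c d f g k (fun q : ℝ × ℝ × ℝ => q.1 ^ α * q.2.1 ^ β * q.2.2 ^ γ * ξ₀ q) p
            = X211 a c d f g k (fun q : ℝ × ℝ × ℝ => q.1 ^ α * q.2.1 ^ β * q.2.2 ^ γ) p * ξ₀ p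
              + (p.1 ^ α * p.2.1 ^ β * p.2.2 ^ γ) * X211 a c d f g k ξ₀ p :=
          X211_mul a c d f g k ((dα.mul dβ).mul dγ) hp.differentiableAt
        have e2 : X211 a c d f g k (fun q : ℝ × ℝ × ℝ => q.1 ^ α * q.2.1 ^ β * q.2.2 ^ γ) p
            = X211 a c d f g k (fun q : ℝ × ℝ × ℝ => q.1 ^ α * q.2.1 ^ β) p * p.2.2 ^ γ
              + (p.1 ^ α * p.2.1 ^ β) * X211 a c d f g k (fun q : ℝ × ℝ × ℝ => q.2.2 ^ γ) p :=
          X211_mul a c d f g k (dα.mul dβ) dγ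
        have e3 : X211 a c d f g k (fun q : ℝ × ℝ × ℝ => q.1 ^ α * q.2.1 ^ β) p
            = X211 a c d f g k (fun q : ℝ × ℝ × ℝ => q.1 ^ α) p * p.2.1 ^ β
              + p.1 ^ α * X211 a c d f g k (fun q : ℝ × ℝ × ℝ => q.2.1 ^ β) p :=
          X211_mul a c d f g k dα dβ
        rw [e, e2, e3, X211_xrpow a c d f g k α hx, X211_yrpow a c d f g k β hy,
          X211_zrpow a c d f g k γ hz] at h0
        have key : p.1 ^ α * p.2.1 ^ β * p.2.2 ^ γ * (X211 a c d f g k ξ₀ p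
            + ((α*a + β*d + γ*g) * p.1 + (α*c + β*f + γ*k) * p.2.2) * ξ₀ p) = 0 := by
          linear_combination h0
        have hne : p.1 ^ α * p.2.1 ^ β * p.2.2 ^ γ ≠ 0 :=
          mul_ne_zero (mul_ne_zero (Real.rpow_pos_of_pos hx α).ne'
            (Real.rpow_pos_of_pos hy β).ne') (Real.rpow_pos_of_pos hz γ).ne'
        exact (mul_eq_zero.mp key).resolve_left hne)
    filter_upwards [hid] with p hp
    linear_combination hp
  -- the linearizing substitutions
  set κ := 2*α - β + γ with hκdef
  refine ⟨fun q => m₁ q ^ (1 - 2*α/κ) * (m₂ q ^ (-(2*γ)/κ) * ξ₀ q ^ (2/κ)),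
    fun q => m₁ q ^ (α/κ) * (m₂ q ^ (γ/κ) * ξ₀ q ^ (-1/κ)),
    fun q => m₁ q ^ (-α/κ) * (m₂ q ^ (1 - γ/κ) * ξ₀ q ^ (1/κ)),
    ?_, ?_, ?_, ?_, ?_, ?_, ?_⟩
  · exact (analyticAt_rpow_comp hm₁ (by rw [hm₁0]; norm_num) _).mul
      ((analyticAt_rpow_comp hm₂ (by rw [hm₂0]; norm_num) _).mul
        (analyticAt_rpow_comp hξ₀ (by rw [hξ₀0]; norm_num) _))
  · simp [hm₁0, hm₂0, hξ₀0]
  · exact (analyticAt_rpow_comp hm₁ (by rw [hm₁0]; norm_num) _).mul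
      ((analyticAt_rpow_comp hm₂ (by rw [hm₂0]; norm_num) _).mul
        (analyticAt_rpow_comp hξ₀ (by rw [hξ₀0]; norm_num) _))
  · simp [hm₁0, hm₂0, hξ₀0]
  · exact (analyticAt_rpow_comp hm₁ (by rw [hm₁0]; norm_num) _).mul
      ((analyticAt_rpow_comp hm₂ (by rw [hm₂0]; norm_num) _).mul
        (analyticAt_rpow_comp hξ₀ (by rw [hξ₀0]; norm_num) _))
  · simp [hm₁0, hm₂0, hξ₀0]
  · filter_upwards [am₁, am₂, aξ, pos₁, pos₂, pos₃, E₁, E₂, E₃]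
      with p hp₁ hp₂ hp₃ h1 h2 h3 e₁ e₂ e₃
    refine ⟨?_, ?_, ?_⟩
    · exact step1 a c d f g k α β γ _ _ _ hp₁.differentiableAt hp₂.differentiableAt
        hp₃.differentiableAt h1 h2 h3 e₁ e₂ e₃
        (by field_simp; ring) (by field_simp; ring)
    · exact step2 a c d f g k α β γ _ _ _ hp₁.differentiableAt hp₂.differentiableAt
        hp₃.differentiableAt h1 h2 h3 e₁ e₂ e₃
        (by field_simp; ring) (by field_simp; ring)
    · exact step3 a c d f g k α β γ _ _ _ hp₁.differentiableAt hp₂.differentiableAt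
        hp₃.differentiableAt h1 h2 h3 e₁ e₂ e₃
        (by field_simp; ring) (by field_simp; ring)
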